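/- If A : ℝ → GL⁺(3,ℝ) is a C² solution of A''(t) = (det A(t))^{1-γ} (A(t)⁻¹)ᵀ with γ > 1, and X(t) = (1/2) tr(A(t) A(t)ᵀ), E_K(t) = (1/2) tr(A'(t)A'(t)ᵀ), E_P(t) = (γ-1)⁻¹(det A(t))^{1-γ}, then X''(t) = 2 E_K(t) + 3(γ-1) E_P(t) for all t. -/

import Mathlib

open Matrix Filter Topology
noncomputable section
attribute [local instance] Matrix.normedAddCommGroup Matrix.normedSpace

abbrev M3 := Matrix (Fin 3) (Fin 3) ℝ

def B0 : M3 →ₗ[ℝ] M3 →ₗ[ℝ] ℝ :=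
  LinearMap.mk₂ ℝ (fun M N => Matrix.trace (M * Nᵀ))
    (by intro M M' N; simp [Matrix.add_mul])
    (by intro c M N; simp [Matrix.smul_mul])
    (by intro M N N'; simp [Matrix.mul_add, Matrix.transpose_add])
    (by intro c M N; simp [Matrix.mul_smul, Matrix.transpose_smul])

def B : M3 →L[ℝ] M3 →L[ℝ] ℝ :=
  LinearMap.toContinuousLinearMap
    ((LinearMap.toContinuousLinearMap :
        (M3 →ₗ[ℝ] ℝ) ≃ₗ[ℝ] (M3 →L[ℝ] ℝ)).toLinearMap ∘ₗ B0)

@[simp] lemma B_apply (M N : M3) : B M N = Matrix.trace (M * Nᵀ) := rfl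

lemma trace_symm (M N : M3) : Matrix.trace (M * Nᵀ) = Matrix.trace (N * Mᵀ) := by
  rw [← Matrix.trace_transpose (M * Nᵀ), Matrix.transpose_mul, Matrix.transpose_transpose,
    Matrix.trace_mul_comm]

set_option maxHeartbeats 2000000 in
lemma prod_deriv {g h : ℝ → M3} (hg : Differentiable ℝ g) (hh : Differentiable ℝ h) (t : ℝ) :
    HasDerivAt (fun s => B (g s) (h s))
      (B (deriv g t) (h t) + B (g t) (deriv h t)) t :=
  (B.hasFDerivAt.comp_hasDerivAt t (hg t).hasDerivAt).clm_apply (hh t).hasDerivAt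

theorem stmt4 (γ : ℝ) (hγ : 1 < γ) (A : ℝ → M3)
    (hA : ContDiff ℝ 2 A)
    (hdet : ∀ t : ℝ, 0 < (A t).det)
    (hODE : ∀ t : ℝ, deriv (deriv A) t = ((A t).det ^ (1 - γ)) • ((A t)⁻¹)ᵀ) :
    ∀ t : ℝ,
      deriv (deriv (fun s => (1/2) * Matrix.trace (A s * (A s)ᵀ))) t
        = 2 * ((1/2) * Matrix.trace (deriv A t * (deriv A t)ᵀ))
          + 3 * (γ - 1) * ((γ - 1)⁻¹ * (A t).det ^ (1 - γ)) := by
  have hA'' : ContDiff ℝ ((1 : ℕ) + 1) A := by exact_mod_cast hA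
  obtain ⟨hA1, -, hA'⟩ := (contDiff_succ_iff_deriv).mp hA''
  have hA2 : Differentiable ℝ (deriv A) := hA'.differentiable (by norm_num)
  intro t
  have key : deriv (fun s => (1/2) * Matrix.trace (A s * (A s)ᵀ))
      = fun s => Matrix.trace (deriv A s * (A s)ᵀ) := by
    funext s
    have h := ((prod_deriv hA1 hA1 s).const_mul (1/2 : ℝ)).deriv
    simp only [B_apply] at h
    rw [h]
    rw [trace_symm (A s) (deriv A s)]
    ring
  rw [key]
  have h2' := prod_deriv hA2 hA1 t
  have h2'' := h2'.deriv
  simp only [B_apply] at h2''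
  rw [h2'', hODE t]
  have hinv : A t * (A t)⁻¹ = 1 := Matrix.mul_nonsing_inv _ ((hdet t).ne').isUnit
  have htr : Matrix.trace (((A t).det ^ (1 - γ) • ((A t)⁻¹)ᵀ) * (A t)ᵀ)
      = 3 * (A t).det ^ (1 - γ) := by
    rw [Matrix.smul_mul, Matrix.trace_smul, ← Matrix.transpose_mul, hinv]
    simp [smul_eq_mul]
    ring
  rw [htr]
  have hne : γ - 1 ≠ 0 := sub_ne_zero.mpr hγ.ne'
  field_simp
  ring
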